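/- Let A ∈ Ω' (i.e., A = B ∪ ({1} × [0,∞)) with B ⊆ [0,1] × [0,∞) bounded closed, each vertical cut A^t for t ∈ [0,1) a nonempty closed interval, and (0,1) ∈ A). Then for every ε > 0 there exists a continuous function ω : [0,1] → [0,∞) with ω(0) = 1 such that every point (t, ω(t)) of its graph is within ℓ∞-distance ε of some point of A. -/

import Mathlib

set_option autoImplicit false

open Set

/-- The vertical cut of a subset of the plane at abscissa `t`. -/
def verticalCut (S : Set (ℝ × ℝ)) (t : ℝ) : Set ℝ := {a : ℝ | (t, a) ∈ S}

/-- Membership in `Ω''`: sets of the form `A ∪ ({1} × [0,∞))` with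
`A ⊆ [0,1] × [0,∞)` bounded and closed. -/
def MemOmegaPP (S : Set (ℝ × ℝ)) : Prop :=
  ∃ A : Set (ℝ × ℝ), IsClosed A ∧ Bornology.IsBounded A ∧
    A ⊆ Icc (0 : ℝ) 1 ×ˢ Ici (0 : ℝ) ∧ S = A ∪ ({(1 : ℝ)} ×ˢ Ici (0 : ℝ))

/-- Membership in `Ω'`. -/
def MemOmegaP (S : Set (ℝ × ℝ)) : Prop :=
  MemOmegaPP S ∧
    (∀ t ∈ Ico (0 : ℝ) 1, ∃ a b : ℝ, a ≤ b ∧ verticalCut S t = Icc a b) ∧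
    (1 : ℝ) ∈ verticalCut S 0

/-- For every `A ∈ Ω'` and `ε > 0` there is a positive continuous path `ω` on `[0,1]` with
`ω(0) = 1` each point of whose graph is within `ℓ∞`-distance `ε` of a point of `A`
(the metric on `ℝ × ℝ` being the `ℓ∞` product metric). -/

lemma core_ivt {K : Set (ℝ × ℝ)} (hK : IsCompact K) {t t' : ℝ} (htt : t ≤ t')
    (hne : ∀ s ∈ Icc t t', ∃ y, (s, y) ∈ K)
    (hcut : ∀ s ∈ Icc t t', ∀ y y' w : ℝ, (s, y) ∈ K → (s, y') ∈ K →
      y ≤ w → w ≤ y' → (s, w) ∈ K)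
    {c c' v : ℝ} (hc : (t, c) ∈ K) (hc' : (t', c') ∈ K)
    (hv1 : c' ≤ v) (hv2 : v ≤ c) :
    ∃ s ∈ Icc t t', (s, v) ∈ K := by
  set V : Set ℝ := Icc t t' ∩ (Prod.fst '' (K ∩ {p : ℝ × ℝ | v ≤ p.2})) with hV
  have hVne : V.Nonempty := ⟨t, ⟨le_refl t, htt⟩, ⟨(t, c), ⟨hc, hv2⟩, rfl⟩⟩
  have hVcompact : IsCompact V := by
    apply isCompact_Icc.inter_right
    exact ((hK.inter_right (isClosed_le continuous_const continuous_snd)).image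
      continuous_fst).isClosed
  set s₀ : ℝ := sSup V with hs₀
  have hs₀V : s₀ ∈ V := hVcompact.sSup_mem hVne
  obtain ⟨hs₀I, ⟨p, ⟨hpK, hpv⟩, hp1⟩⟩ := hs₀V
  by_cases hex : ∃ y, (s₀, y) ∈ K ∧ y ≤ v
  · obtain ⟨y, hyK, hyv⟩ := hex
    refine ⟨s₀, hs₀I, hcut s₀ hs₀I y p.2 v hyK (by have h2 : (p.1, p.2) ∈ K := hpK; rwa [hp1] at h2) hyv hpv⟩
  · have hlt : s₀ < t' := by
      rcases lt_or_eq_of_le hs₀I.2 with h | h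
      · exact h
      · exact absurd ⟨c', by rw [h]; exact hc', hv1⟩ hex
    have hLc : IsClosed (Prod.fst '' (K ∩ {p : ℝ × ℝ | p.2 ≤ v})) :=
      ((hK.inter_right (isClosed_le continuous_snd continuous_const)).image
        continuous_fst).isClosed
    have hsub : Ioc s₀ t' ⊆ Prod.fst '' (K ∩ {p : ℝ × ℝ | p.2 ≤ v}) := by
      intro s hs
      have hsI : s ∈ Icc t t' := ⟨le_trans hs₀I.1 hs.1.le, hs.2⟩
      obtain ⟨y, hy⟩ := hne s hsI
      have hsV : s ∉ V := fun h => absurd (le_csSup hVcompact.bddAbove h) (not_le.2 hs.1)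
      have hyv : y ≤ v := by
        by_contra hcon
        exact hsV ⟨hsI, ⟨(s, y), ⟨hy, (not_le.1 hcon).le⟩, rfl⟩⟩
      exact ⟨(s, y), ⟨hy, hyv⟩, rfl⟩
    have hmem : s₀ ∈ Prod.fst '' (K ∩ {p : ℝ × ℝ | p.2 ≤ v}) := by
      have h1 : s₀ ∈ closure (Ioc s₀ t') := by
        rw [closure_Ioc hlt.ne]; exact ⟨le_refl _, hlt.le⟩
      exact hLc.closure_subset ((closure_mono hsub).trans (by rw [hLc.closure_eq]) h1)
    obtain ⟨q, ⟨hqK, hqv⟩, hq1⟩ := hmem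
    exact absurd ⟨q.2, by have h2 : (q.1, q.2) ∈ K := hqK; rwa [hq1] at h2, hqv⟩ hex

lemma core_ivt' {K : Set (ℝ × ℝ)} (hK : IsCompact K) {t t' : ℝ} (htt : t ≤ t')
    (hne : ∀ s ∈ Icc t t', ∃ y, (s, y) ∈ K)
    (hcut : ∀ s ∈ Icc t t', ∀ y y' w : ℝ, (s, y) ∈ K → (s, y') ∈ K →
      y ≤ w → w ≤ y' → (s, w) ∈ K)
    {c c' v : ℝ} (hc : (t, c) ∈ K) (hc' : (t', c') ∈ K)
    (hv1 : c ≤ v) (hv2 : v ≤ c') :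
    ∃ s ∈ Icc t t', (s, v) ∈ K := by
  set K' : Set (ℝ × ℝ) := (fun p : ℝ × ℝ => (t + t' - p.1, p.2)) '' K with hK'
  have hmem : ∀ s y : ℝ, (s, y) ∈ K' ↔ (t + t' - s, y) ∈ K := by
    intro s y
    constructor
    · rintro ⟨p, hp, heq⟩
      obtain ⟨h1, h2⟩ := Prod.mk.injEq .. ▸ heq
      have : t + t' - s = p.1 := by simp only [Prod.mk.injEq] at heq; linarith [heq.1]
      rw [this]
      have h3 : y = p.2 := by simp only [Prod.mk.injEq] at heq; exact heq.2.symm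
      rw [h3]
      exact hp
    · intro h
      exact ⟨(t + t' - s, y), h, by simp⟩
  have hK'c : IsCompact K' := hK.image (by fun_prop)
  have hsymm : ∀ s : ℝ, s ∈ Icc t t' → t + t' - s ∈ Icc t t' := by
    intro s hs; exact ⟨by linarith [hs.2], by linarith [hs.1]⟩
  obtain ⟨s, hsI, hsK⟩ := core_ivt hK'c htt
    (fun s hs => by obtain ⟨y, hy⟩ := hne _ (hsymm s hs); exact ⟨y, (hmem s y).2 hy⟩)
    (fun s hs y y' w hy hy' h1 h2 => (hmem s w).2
      (hcut _ (hsymm s hs) y y' w ((hmem s y).1 hy) ((hmem s y').1 hy') h1 h2))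
    (c := c') (c' := c) (v := v)
    ((hmem t c').2 (by rw [show t + t' - t = t' by ring]; exact hc'))
    ((hmem t' c).2 (by rw [show t + t' - t' = t by ring]; exact hc))
    hv1 hv2
  exact ⟨t + t' - s, hsymm s hsI, (hmem s v).1 hsK⟩

lemma ivtS {S : Set (ℝ × ℝ)} (hS : MemOmegaP S) {t t' c c' v : ℝ}
    (ht : 0 ≤ t) (htt : t ≤ t') (ht' : t' ≤ 1)
    (hc : (t, c) ∈ S) (hc' : (t', c') ∈ S)
    (h1 : min c c' ≤ v) (h2 : v ≤ max c c') :
    ∃ s ∈ Icc t t', (s, v) ∈ S := by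
  obtain ⟨⟨A, hAcl, hAbd, hAsub, hSeq⟩, hcuts, h0⟩ := hS
  have hnn : ∀ p ∈ S, 0 ≤ p.2 := by
    intro p hp
    rw [hSeq] at hp
    rcases hp with hp | hp
    · exact (hAsub hp).2
    · exact hp.2
  have hv0 : 0 ≤ v := le_trans (le_min (hnn _ hc) (hnn _ hc')) h1
  rcases eq_or_lt_of_le ht' with h1' | h1'
  · exact ⟨t', ⟨htt, le_refl _⟩, by rw [hSeq]; exact Or.inr ⟨h1'.symm ▸ rfl, hv0⟩⟩
  · -- t' < 1, work inside A
    have hmemA : ∀ s y : ℝ, s ≤ t' → ((s, y) ∈ S ↔ (s, y) ∈ A) := by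
      intro s y hs
      rw [hSeq]
      constructor
      · rintro (h | h)
        · exact h
        · exact absurd h.1 (by simp; intro h'; rw [h'] at hs; linarith)
      · exact Or.inl
    have hKc : IsCompact A := Metric.isCompact_of_isClosed_isBounded hAcl hAbd
    have hne : ∀ s ∈ Icc t t', ∃ y, (s, y) ∈ A := by
      intro s hs
      obtain ⟨a, b, hab, hcut⟩ := hcuts s ⟨le_trans ht hs.1, lt_of_le_of_lt hs.2 h1'⟩
      have : a ∈ verticalCut S s := by rw [hcut]; exact ⟨le_refl _, hab⟩
      exact ⟨a, (hmemA s a hs.2).1 this⟩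
    have hcutA : ∀ s ∈ Icc t t', ∀ y y' w : ℝ, (s, y) ∈ A → (s, y') ∈ A →
        y ≤ w → w ≤ y' → (s, w) ∈ A := by
      intro s hs y y' w hy hy' hw1 hw2
      obtain ⟨a, b, hab, hcut⟩ := hcuts s ⟨le_trans ht hs.1, lt_of_le_of_lt hs.2 h1'⟩
      have hyS : y ∈ verticalCut S s := (hmemA s y hs.2).2 hy
      have hy'S : y' ∈ verticalCut S s := (hmemA s y' hs.2).2 hy'
      rw [hcut] at hyS hy'S
      have : w ∈ verticalCut S s := by
        rw [hcut]; exact ⟨le_trans hyS.1 hw1, le_trans hw2 hy'S.2⟩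
      exact (hmemA s w hs.2).1 this
    have hcA : (t, c) ∈ A := (hmemA t c htt).1 hc
    have hc'A : (t', c') ∈ A := (hmemA t' c' (le_refl _)).1 hc'
    rcases le_total c' c with hcc | hcc
    · obtain ⟨s, hsI, hsA⟩ := core_ivt hKc htt hne hcutA hcA hc'A
        (min_eq_right hcc ▸ h1) (max_eq_left hcc ▸ h2)
      exact ⟨s, hsI, (hmemA s v hsI.2).2 hsA⟩
    · obtain ⟨s, hsI, hsA⟩ := core_ivt' hKc htt hne hcutA hcA hc'A
        (min_eq_left hcc ▸ h1) (max_eq_right hcc ▸ h2)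
      exact ⟨s, hsI, (hmemA s v hsI.2).2 hsA⟩

theorem omegaP_neighbourhood_nonempty (S : Set (ℝ × ℝ)) (hS : MemOmegaP S)
    (ε : ℝ) (hε : 0 < ε) :
    ∃ ω : ℝ → ℝ, ContinuousOn ω (Icc (0 : ℝ) 1) ∧ ω 0 = 1 ∧
      (∀ t ∈ Icc (0 : ℝ) 1, 0 ≤ ω t) ∧
      ∀ t ∈ Icc (0 : ℝ) 1, ∃ p ∈ S, dist ((t, ω t) : ℝ × ℝ) p < ε := by
  obtain ⟨hPP, hcuts, h0⟩ := hS
  obtain ⟨A, hAcl, hAbd, hAsub, hSeq⟩ := hPP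
  have hnn : ∀ p ∈ S, 0 ≤ p.2 := by
    intro p hp
    rw [hSeq] at hp
    rcases hp with hp | hp
    · exact (hAsub hp).2
    · exact hp.2
  -- choose n with 1/n < ε
  obtain ⟨n, hn⟩ := exists_nat_gt (1 / ε)
  have hn0 : 0 < n := by
    by_contra h
    push_neg at h
    interval_cases n
    simp at hn
    linarith [one_div_pos.2 hε]
  have hnR : (0 : ℝ) < n := by exact_mod_cast hn0
  have hinv : 1 / (n : ℝ) < ε := by
    rw [div_lt_iff₀ hnR]
    have h2 := mul_lt_mul_of_pos_right hn hε
    rw [one_div, inv_mul_cancel₀ hε.ne'] at h2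
    nlinarith
  -- pick points on the cuts at i/n
  have hpick : ∀ i : ℕ, ∃ y : ℝ, 0 ≤ y ∧ (i ≤ n → ((i : ℝ) / n, y) ∈ S) ∧
      (i = 0 → y = 1) := by
    intro i
    rcases Nat.eq_zero_or_pos i with rfl | hi
    · refine ⟨1, zero_le_one, fun _ => ?_, fun _ => rfl⟩
      simpa [verticalCut] using h0
    · by_cases hin : i ≤ n
      · rcases eq_or_lt_of_le hin with rfl | hlt
        · refine ⟨0, le_refl _, fun _ => ?_, by omega⟩
          rw [hSeq, div_self hnR.ne']
          exact Or.inr ⟨rfl, mem_Ici.2 le_rfl⟩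
        · obtain ⟨a, b, hab, hcut⟩ := hcuts ((i : ℝ) / n)
            ⟨by positivity, by rw [div_lt_one hnR]; exact_mod_cast hlt⟩
          have haS : ((i : ℝ) / n, a) ∈ S := by
            have : a ∈ verticalCut S ((i : ℝ) / n) := by rw [hcut]; exact ⟨le_refl _, hab⟩
            exact this
          exact ⟨a, hnn _ haS, fun _ => haS, by omega⟩
      · exact ⟨0, le_refl _, fun h => absurd h hin, by omega⟩
  choose c hc_nn hc_mem hc_one using hpick
  -- the piecewise linear path
  set ω : ℝ → ℝ := fun t =>
    c 0 + ∑ i ∈ Finset.range n, (c (i + 1) - c i) * min 1 (max 0 ((n : ℝ) * t - i)) with hω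
  have hcont : Continuous ω := by
    apply continuous_const.add
    apply continuous_finset_sum
    intro i _
    exact continuous_const.mul (continuous_const.min
      (continuous_const.max ((continuous_const.mul continuous_id).sub continuous_const)))
  have hω0 : ω 0 = 1 := by
    rw [hω]
    simp only
    rw [Finset.sum_eq_zero, add_zero, hc_one 0 rfl]
    intro i _
    have h1 : (n : ℝ) * 0 - i = -i := by ring
    rw [h1, max_eq_left (neg_nonpos.2 (Nat.cast_nonneg i)), min_eq_right zero_le_one, mul_zero]
  -- evaluation on [i/n, (i+1)/n]
  have heval : ∀ (i : ℕ) (t : ℝ), i < n → (i : ℝ) ≤ n * t → n * t ≤ i + 1 →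
      ω t = c i + (c (i + 1) - c i) * ((n : ℝ) * t - i) := by
    intro i t hin hle hge
    have hsplit : ∑ j ∈ Finset.range n, (c (j + 1) - c j) * min 1 (max 0 ((n : ℝ) * t - j))
        = (∑ j ∈ Finset.range (i + 1), (c (j + 1) - c j) * min 1 (max 0 ((n : ℝ) * t - j)))
          + ∑ j ∈ Finset.Ico (i + 1) n, (c (j + 1) - c j) * min 1 (max 0 ((n : ℝ) * t - j)) := by
      exact (Finset.sum_range_add_sum_Ico _ (Nat.succ_le_of_lt hin)).symm
    rw [hω]
    simp only
    rw [hsplit]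
    have hz : ∑ j ∈ Finset.Ico (i + 1) n, (c (j + 1) - c j) * min 1 (max 0 ((n : ℝ) * t - j)) = 0 := by
      apply Finset.sum_eq_zero
      intro j hj
      have hj1 : (i : ℝ) + 1 ≤ j := by exact_mod_cast (Finset.mem_Ico.1 hj).1
      rw [max_eq_left (by linarith), min_eq_right zero_le_one, mul_zero]
    rw [hz, add_zero, Finset.sum_range_succ]
    have hones : ∑ j ∈ Finset.range i, (c (j + 1) - c j) * min 1 (max 0 ((n : ℝ) * t - j))
        = ∑ j ∈ Finset.range i, (c (j + 1) - c j) := by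
      apply Finset.sum_congr rfl
      intro j hj
      have hj1 : (j : ℝ) + 1 ≤ i := by exact_mod_cast Nat.succ_le_of_lt (Finset.mem_range.1 hj)
      rw [max_eq_right (by linarith), min_eq_left (by linarith), mul_one]
    rw [hones, Finset.sum_range_sub,
      max_eq_right (by linarith), min_eq_right (by linarith)]
    ring
  -- main pointwise estimate
  have key : ∀ t ∈ Icc (0 : ℝ) 1, 0 ≤ ω t ∧ ∃ p ∈ S, dist ((t, ω t) : ℝ × ℝ) p < ε := by
    intro t ht
    have hx0 : 0 ≤ (n : ℝ) * t := mul_nonneg hnR.le ht.1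
    obtain ⟨i, hin, hle, hge⟩ : ∃ i : ℕ, i < n ∧ (i : ℝ) ≤ n * t ∧ (n : ℝ) * t ≤ i + 1 := by
      by_cases hxn : (n : ℝ) * t < n
      · refine ⟨⌊(n : ℝ) * t⌋₊, ?_, Nat.floor_le hx0, (Nat.lt_floor_add_one _).le⟩
        exact_mod_cast Nat.floor_lt hx0 |>.2 hxn
      · have hxe : (n : ℝ) * t = n := le_antisymm
          (by nlinarith [ht.2]) (not_lt.1 hxn)
        refine ⟨n - 1, by omega, ?_, ?_⟩
        · rw [hxe, Nat.cast_sub hn0]; simp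
        · rw [hxe, Nat.cast_sub hn0]; simp
    have hev := heval i t hin hle hge
    set lam : ℝ := (n : ℝ) * t - i with hlam
    have hlam0 : 0 ≤ lam := by simp [hlam]; linarith
    have hlam1 : lam ≤ 1 := by simp [hlam]; linarith
    have hbetween1 : min (c i) (c (i + 1)) ≤ ω t := by
      rw [hev]
      rcases le_total (c i) (c (i + 1)) with h | h
      · rw [min_eq_left h]; nlinarith
      · rw [min_eq_right h]; nlinarith
    have hbetween2 : ω t ≤ max (c i) (c (i + 1)) := by
      rw [hev]
      rcases le_total (c i) (c (i + 1)) with h | h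
      · rw [max_eq_right h]; nlinarith
      · rw [max_eq_left h]; nlinarith
    have hωnn : 0 ≤ ω t := le_trans (le_min (hc_nn i) (hc_nn (i + 1))) hbetween1
    refine ⟨hωnn, ?_⟩
    -- use IVT
    have hiS : ((i : ℝ) / n, c i) ∈ S := hc_mem i (by omega)
    have hi1S : (((i : ℝ) + 1) / n, c (i + 1)) ∈ S := by
      have := hc_mem (i + 1) (by omega)
      rwa [Nat.cast_add, Nat.cast_one] at this
    obtain ⟨s, hsI, hsS⟩ := ivtS ⟨⟨A, hAcl, hAbd, hAsub, hSeq⟩, hcuts, h0⟩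
      (t := (i : ℝ) / n) (t' := ((i : ℝ) + 1) / n)
      (by positivity)
      (by rw [div_le_div_iff₀ hnR hnR]; nlinarith)
      (by rw [div_le_one hnR]; exact_mod_cast hin)
      hiS hi1S hbetween1 hbetween2
    refine ⟨(s, ω t), hsS, ?_⟩
    rw [Prod.dist_eq]
    simp only [dist_self, Real.dist_eq]
    have htlo : (i : ℝ) / n ≤ t := by rw [div_le_iff₀ hnR]; linarith
    have hthi : t ≤ ((i : ℝ) + 1) / n := by rw [le_div_iff₀ hnR]; linarith
    have e1 : ((i : ℝ) + 1) / n - (i : ℝ) / n = 1 / n := by field_simp; ring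
    have h1 : |t - s| ≤ 1 / n := by
      rw [abs_le]
      constructor <;> linarith [hsI.1, hsI.2]
    exact max_lt (lt_of_le_of_lt h1 hinv) hε
  exact ⟨ω, hcont.continuousOn, hω0, fun t ht => (key t ht).1,
    fun t ht => (key t ht).2⟩
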